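/- Fix a > 0. Let (w_n) be a sequence of functions in B_a that converges to some w ∈ B*_a with respect to the uniform topology as n → ∞. Then ρ(w_n) → ρ(w) as n → ∞. Furthermore, the map T^me_a is continuous at every w ∈ B*_a with respect to the uniform topology, i.e., T^me_a(w_n) → T^me_a(w) uniformly on [0,a]. -/

import Mathlib

open Set Filter MeasureTheory Topology UniformConvergence

noncomputable section

/-- Supremum of `f` over the interval `[s,t]`. -/
def fileMaxOn (f : ℝ → ℝ) (s t : ℝ) : ℝ := sSup (f '' Set.Icc s t)

/-- Infimum of `f` over the interval `[s,t]`. -/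
def fileMinOn (f : ℝ → ℝ) (s t : ℝ) : ℝ := sInf (f '' Set.Icc s t)

/-- `ρ(w)`: the first time in `[0,a]` at which `f` attains its maximum over `[0,a]`. -/
def rho (a : ℝ) (f : ℝ → ℝ) : ℝ := sInf {s | s ∈ Set.Icc 0 a ∧ f s = fileMaxOn f 0 a}

/-- membership in `B_a`: continuous bridges of length `a`. -/
def IsBridge (a : ℝ) (f : ℝ → ℝ) : Prop :=
  ContinuousOn f (Set.Icc 0 a) ∧ f 0 = 0 ∧ f a = 0

/-- membership in `B*_a`: bridges whose maximum is attained at a unique point. -/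
def IsBridgeStar (a : ℝ) (f : ℝ → ℝ) : Prop :=
  IsBridge a f ∧ ∃! s, s ∈ Set.Icc 0 a ∧ ∀ u ∈ Set.Icc 0 a, f u ≤ f s

/-- membership in `M_a`. -/
def IsMeander (a : ℝ) (f : ℝ → ℝ) : Prop :=
  ContinuousOn f (Set.Icc 0 a) ∧ f 0 = 0 ∧ ∀ s ∈ Set.Icc 0 a, f s ≤ f a

/-- membership in `M*_a`. -/
def IsMeanderStar (a : ℝ) (f : ℝ → ℝ) : Prop :=
  ContinuousOn f (Set.Icc 0 a) ∧ f 0 = 0 ∧ rho a f = a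

/-- The transformation `T^me_a`. -/
def Tme (a : ℝ) (f : ℝ → ℝ) : ℝ → ℝ := fun t =>
  if t ≤ rho a f then f t else f (rho a f) + f (a + rho a f - t)

/-- `γ_{f(a)/2}`: the first time in `[0,a]` at which `f` hits the level `f(a)/2`. -/
def gammaHalf (a : ℝ) (f : ℝ → ℝ) : ℝ := sInf {s | s ∈ Set.Icc 0 a ∧ f s = f a / 2}

/-- The transformation `T^br_a`. -/
def Tbr (a : ℝ) (f : ℝ → ℝ) : ℝ → ℝ := fun t =>
  if t ≤ gammaHalf a f then f t else f (a + gammaHalf a f - t) - f (gammaHalf a f)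

/-- The Brownian scaling map `S_b`. -/
def scaleMap (b : ℝ) (f : ℝ → ℝ) : ℝ → ℝ := fun t => (Real.sqrt b)⁻¹ * f (b * t)

/-- `m^br_t(w)` (for bridges of length `1`). -/
def mbr (f : ℝ → ℝ) (t : ℝ) : ℝ := if t ≤ rho 1 f then fileMaxOn f 0 t else fileMaxOn f t 1

/-- `g^br_t(w)`: left endpoint of the excursion of `m^br(w) - w` straddling `t`. -/
def gbr (f : ℝ → ℝ) (t : ℝ) : ℝ := sSup {s | s ∈ Set.Icc 0 t ∧ mbr f s - f s = 0}

/-- `d^br_t(w)`: right endpoint of the excursion of `m^br(w) - w` straddling `t`,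
with the convention `d^br_1(w) = 1`. -/
def dbr (f : ℝ → ℝ) (t : ℝ) : ℝ :=
  if t = 1 then 1 else sInf {s | s ∈ Set.Ioc t 1 ∧ mbr f s - f s = 0}

/-- `r^br_t(w)`: maximum of `m^br(w) - w` over the excursion interval. -/
def rbr (f : ℝ → ℝ) (t : ℝ) : ℝ :=
  sSup ((fun s => mbr f s - f s) '' Set.Icc (gbr f t) (dbr f t))

/-- `u^br_t(w)`: Lebesgue time spent, up to time `t`, in non-excised excursions. -/
def ubr (f : ℝ → ℝ) (t : ℝ) : ℝ := ∫ s in (0:ℝ)..t, if rbr f s < mbr f s then (1:ℝ) else 0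

/-- `α^br_s(w)`, with the convention `α^br_{u^br_1(w)}(w) = 1`. -/
def abr (f : ℝ → ℝ) (s : ℝ) : ℝ :=
  if s = ubr f 1 then 1 else sInf {t | t ∈ Set.Icc (0:ℝ) 1 ∧ s < ubr f t}

/-- `H^br(w)` (as a function; it is relevant on `[0, u^br_1(w)]`). -/
def Hbr (f : ℝ → ℝ) : ℝ → ℝ := fun t => f (abr f t)

/-- `G^br(w)`. -/
def Gbr (f : ℝ → ℝ) : ℝ → ℝ := if 0 < ubr f 1 then scaleMap (ubr f 1) (Hbr f) else 0

/-- the past-maximum function `w̄`. -/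
def pastMax (f : ℝ → ℝ) (t : ℝ) : ℝ := fileMaxOn f 0 t

/-- `g^me_t(w)`. -/
def gme (f : ℝ → ℝ) (t : ℝ) : ℝ := sSup {s | s ∈ Set.Icc 0 t ∧ pastMax f s - f s = 0}

/-- `d^me_t(w)`, with the convention `d^me_1(w) = 1`. -/
def dme (f : ℝ → ℝ) (t : ℝ) : ℝ :=
  if t = 1 then 1 else sInf {s | s ∈ Set.Ioc t 1 ∧ pastMax f s - f s = 0}

/-- `r^me_t(w)`. -/
def rme (f : ℝ → ℝ) (t : ℝ) : ℝ :=
  sSup ((fun s => pastMax f s - f s) '' Set.Icc (gme f t) (dme f t))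

/-- `u^me_t(w)`. -/
def ume (f : ℝ → ℝ) (t : ℝ) : ℝ :=
  if t ≤ gammaHalf 1 f then ∫ s in (0:ℝ)..t, if rme f s < pastMax f s then (1:ℝ) else 0
  else (∫ s in (0:ℝ)..gammaHalf 1 f, if rme f s < pastMax f s then (1:ℝ) else 0) +
    ∫ s in gammaHalf 1 f..t, if rme f s < pastMax f s - f 1 / 2 then (1:ℝ) else 0

/-- `α^me_s(w)`, with the convention `α^me_{u^me_1(w)}(w) = 1`. -/
def ame (f : ℝ → ℝ) (s : ℝ) : ℝ :=
  if s = ume f 1 then 1 else sInf {t | t ∈ Set.Icc (0:ℝ) 1 ∧ s < ume f t}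

/-- `H^me(w)`. -/
def Hme (f : ℝ → ℝ) : ℝ → ℝ := fun t => f (ame f t)

/-- `G^me(w)`. -/
def Gme (f : ℝ → ℝ) : ℝ → ℝ := if 0 < ume f 1 then scaleMap (ume f 1) (Hme f) else 0

/-- Regularity property (i): uniqueness of one-sided maximizers at rational times. -/
def UniqueOneSidedMax (f : ℝ → ℝ) : Prop :=
  ∀ t : ℚ, (t : ℝ) ∈ Set.Icc (0:ℝ) 1 →
    (∃! s, s ∈ Set.Icc (0:ℝ) (t:ℝ) ∧ ∀ u ∈ Set.Icc (0:ℝ) (t:ℝ), f u ≤ f s) ∧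
    (∃! s, s ∈ Set.Icc ((t:ℝ)) 1 ∧ ∀ u ∈ Set.Icc ((t:ℝ)) 1, f u ≤ f s)

/-- Regularity property (ii): the level `0` is not a strict local minimum of `f` on `[0,1]`. -/
def NoStrictLocalMinAtZero (f : ℝ → ℝ) : Prop :=
  ¬ ∃ t ∈ Set.Icc (0:ℝ) 1, f t = 0 ∧
      ∃ δ > 0, ∀ s ∈ Set.Icc (0:ℝ) 1, s ≠ t → |s - t| < δ → f t < f s

/-- `w ∈ B^reg_1`. -/
def Regular (f : ℝ → ℝ) : Prop :=
  IsBridge 1 f ∧ UniqueOneSidedMax f ∧ NoStrictLocalMinAtZero f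

lemma rho_spec {a : ℝ} (ha : 0 < a) {f : ℝ → ℝ} (hf : ContinuousOn f (Set.Icc 0 a)) :
    rho a f ∈ Set.Icc 0 a ∧ ∀ u ∈ Set.Icc (0:ℝ) a, f u ≤ f (rho a f) := by
  obtain ⟨x, hx, hmax, hge⟩ := isCompact_Icc.exists_sSup_image_eq_and_ge
    (Set.nonempty_Icc.2 ha.le) hf
  have hSeq : {s | s ∈ Set.Icc 0 a ∧ f s = fileMaxOn f 0 a}
      = Set.Icc 0 a ∩ f ⁻¹' {fileMaxOn f 0 a} := rfl
  have hclosed : IsClosed {s | s ∈ Set.Icc 0 a ∧ f s = fileMaxOn f 0 a} := by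
    rw [hSeq]; exact hf.preimage_isClosed_of_isClosed isClosed_Icc isClosed_singleton
  have hcpt : IsCompact {s | s ∈ Set.Icc 0 a ∧ f s = fileMaxOn f 0 a} :=
    isCompact_Icc.of_isClosed_subset hclosed (fun s hs => hs.1)
  have hne : {s | s ∈ Set.Icc 0 a ∧ f s = fileMaxOn f 0 a}.Nonempty := ⟨x, hx, hmax.symm⟩
  have hmem : rho a f ∈ {s | s ∈ Set.Icc 0 a ∧ f s = fileMaxOn f 0 a} := hcpt.sInf_mem hne
  refine ⟨hmem.1, fun u hu => ?_⟩
  calc f u ≤ f x := hge u hu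
  _ = fileMaxOn f 0 a := hmax.symm
  _ = f (rho a f) := hmem.2.symm

lemma rho_tendsto {a : ℝ} (ha : 0 < a) {w : ℕ → ℝ → ℝ} {v : ℝ → ℝ}
    (hw : ∀ n, ContinuousOn (w n) (Set.Icc 0 a)) (hv : IsBridgeStar a v)
    (hconv : TendstoUniformlyOn w v atTop (Set.Icc 0 a)) :
    Tendsto (fun n => rho a (w n)) atTop (nhds (rho a v)) := by
  obtain ⟨hρmem, hρmax⟩ := rho_spec ha hv.1.1
  obtain ⟨s₀, hs₀, huniq⟩ := hv.2
  have hρs₀ : rho a v = s₀ := huniq _ ⟨hρmem, hρmax⟩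
  rw [Metric.tendsto_nhds]
  intro ε hε
  set K := Set.Icc 0 a ∩ {x | ε ≤ |x - rho a v|} with hK
  by_cases hKne : K.Nonempty
  · have hKcl : IsClosed {x : ℝ | ε ≤ |x - rho a v|} :=
      isClosed_le continuous_const ((continuous_id.sub continuous_const).abs)
    have hKcpt : IsCompact K := isCompact_Icc.inter_right hKcl
    obtain ⟨y, hyK, hymax⟩ := hKcpt.exists_isMaxOn hKne
      (hv.1.1.mono Set.inter_subset_left)
    have hyIcc : y ∈ Set.Icc (0:ℝ) a := hyK.1
    have hyne : y ≠ rho a v := by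
      intro h
      have := hyK.2
      rw [h] at this
      simp at this
      linarith
    have hylt : v y < v (rho a v) := by
      rcases lt_or_eq_of_le (hρmax y hyIcc) with h | h
      · exact h
      · exfalso
        have hy' : ∀ u ∈ Set.Icc (0:ℝ) a, v u ≤ v y := fun u hu => (hρmax u hu).trans h.ge
        have := huniq y ⟨hyIcc, hy'⟩
        exact hyne (this.trans hρs₀.symm)
    set δ := (v (rho a v) - v y) / 2 with hδ
    have hδpos : 0 < δ := by simp only [hδ]; linarith
    filter_upwards [Metric.tendstoUniformlyOn_iff.1 hconv δ hδpos] with n hn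
    obtain ⟨hρnmem, hρnmax⟩ := rho_spec ha (hw n)
    by_contra hcon
    push_neg at hcon
    have hρnK : rho a (w n) ∈ K := by
      refine ⟨hρnmem, ?_⟩
      simpa [Real.dist_eq] using hcon
    have h1 : dist (v (rho a v)) (w n (rho a v)) < δ := hn _ hρmem
    have h2 : dist (v (rho a (w n))) (w n (rho a (w n))) < δ := hn _ hρnmem
    rw [Real.dist_eq, abs_lt] at h1 h2
    have h3 : w n (rho a v) ≤ w n (rho a (w n)) := hρnmax _ hρmem
    have h4 : v (rho a (w n)) ≤ v y := hymax hρnK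
    linarith [hδpos]
  · filter_upwards with n
    obtain ⟨hρnmem, _⟩ := rho_spec ha (hw n)
    by_contra hcon
    push_neg at hcon
    exact hKne ⟨rho a (w n), hρnmem, by simpa [Real.dist_eq] using hcon⟩

/-- convergence of the argmax and continuity of `T^me_a` at points of `B*_a`. -/
theorem stmt0 (a : ℝ) (ha : 0 < a) (w : ℕ → ℝ → ℝ) (v : ℝ → ℝ)
    (hw : ∀ n, IsBridge a (w n)) (hv : IsBridgeStar a v)
    (hconv : TendstoUniformlyOn w v atTop (Set.Icc 0 a)) :
    Tendsto (fun n => rho a (w n)) atTop (nhds (rho a v)) ∧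
    TendstoUniformlyOn (fun n => Tme a (w n)) (Tme a v) atTop (Set.Icc 0 a) := by
  have hrt := rho_tendsto ha (fun n => (hw n).1) hv hconv
  refine ⟨hrt, ?_⟩
  obtain ⟨hρmem, hρmax⟩ := rho_spec ha hv.1.1
  have hv0 : v 0 = 0 := hv.1.2.1
  have hva : v a = 0 := hv.1.2.2
  rw [Metric.tendstoUniformlyOn_iff]
  intro ε hε
  set ε' := ε / 5 with hε'
  have hε'pos : 0 < ε' := by positivity
  obtain ⟨δ, hδpos, hUC⟩ := Metric.uniformContinuousOn_iff.1
    (isCompact_Icc.uniformContinuousOn_of_continuous hv.1.1) ε' hε'pos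
  have hev1 := Metric.tendstoUniformlyOn_iff.1 hconv ε' hε'pos
  have hev2 := Metric.tendsto_nhds.1 hrt δ hδpos
  filter_upwards [hev1, hev2] with n h1 h2 t ht
  obtain ⟨hρnmem, hρnmax⟩ := rho_spec ha (hw n).1
  set ρ := rho a v
  set ρn := rho a (w n)
  simp only [Real.dist_eq] at h1 h2 ⊢
  -- basic bounds
  have hta : t ≤ a := ht.2
  have ht0 : 0 ≤ t := ht.1
  have hρ0 : (0:ℝ) ≤ ρ := hρmem.1
  have hρa : ρ ≤ a := hρmem.2
  have hρn0 : (0:ℝ) ≤ ρn := hρnmem.1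
  have hρna : ρn ≤ a := hρnmem.2
  -- |w n ρn - v ρ| < ε'
  have hb1 : |v ρn - w n ρn| < ε' := h1 _ hρnmem
  have hb2 : |v ρ - w n ρ| < ε' := h1 _ hρmem
  have hb3 : v ρn ≤ v ρ := hρmax _ hρnmem
  have hb4 : w n ρ ≤ w n ρn := hρnmax _ hρmem
  rw [abs_lt] at hb1 hb2 h2
  obtain ⟨h2l, h2r⟩ := h2
  obtain ⟨hb1l, hb1r⟩ := hb1
  obtain ⟨hb2l, hb2r⟩ := hb2
  simp only [Tme]
  split_ifs with hc1 hc2 hc2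
  · -- t ≤ ρ, t ≤ ρn
    have := h1 t ht
    rw [abs_lt] at this ⊢
    constructor <;> linarith
  · -- t ≤ ρ, ρn < t
    push_neg at hc2
    set x := a + ρn - t with hx
    have hxIcc : x ∈ Set.Icc (0:ℝ) a := ⟨by simp only [hx]; linarith, by simp only [hx]; linarith⟩
    have hxa : |x - a| < δ := by
      rw [abs_lt]; constructor <;> simp only [hx] <;> linarith
    have hvx : |v x - v a| < ε' := by
      have := hUC x hxIcc a (Set.right_mem_Icc.2 ha.le) (by rwa [Real.dist_eq])
      rwa [Real.dist_eq] at this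
    have hwx : |v x - w n x| < ε' := h1 x hxIcc
    have htρ : |v t - v ρ| < ε' := by
      have hd : dist t ρ < δ := by rw [Real.dist_eq, abs_lt]; constructor <;> linarith
      have := hUC t ht ρ hρmem hd
      rwa [Real.dist_eq] at this
    rw [abs_lt] at hvx hwx htρ ⊢
    rw [hva] at hvx
    constructor <;> linarith
  · -- ρ < t, t ≤ ρn
    push_neg at hc1
    set y := a + ρ - t with hy
    have hyIcc : y ∈ Set.Icc (0:ℝ) a := ⟨by simp only [hy]; linarith, by simp only [hy]; linarith⟩
    have hya : |y - a| < δ := by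
      rw [abs_lt]; constructor <;> simp only [hy] <;> linarith
    have hvy : |v y - v a| < ε' := by
      have := hUC y hyIcc a (Set.right_mem_Icc.2 ha.le) (by rwa [Real.dist_eq])
      rwa [Real.dist_eq] at this
    have hwt : |v t - w n t| < ε' := h1 t ht
    have htρ : |v ρ - v t| < ε' := by
      have hd : dist ρ t < δ := by rw [Real.dist_eq, abs_lt]; constructor <;> linarith
      have := hUC ρ hρmem t ht hd
      rwa [Real.dist_eq] at this
    rw [abs_lt] at hvy hwt htρ ⊢
    rw [hva] at hvy
    constructor <;> linarith
  · -- ρ < t, ρn < t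
    push_neg at hc1 hc2
    set x := a + ρn - t with hx
    set y := a + ρ - t with hy
    have hxIcc : x ∈ Set.Icc (0:ℝ) a := ⟨by simp only [hx]; linarith, by simp only [hx]; linarith⟩
    have hyIcc : y ∈ Set.Icc (0:ℝ) a := ⟨by simp only [hy]; linarith, by simp only [hy]; linarith⟩
    have hxy : |y - x| < δ := by
      rw [abs_lt]; constructor <;> simp only [hx, hy] <;> linarith
    have hvxy : |v y - v x| < ε' := by
      have := hUC y hyIcc x hxIcc (by rwa [Real.dist_eq])
      rwa [Real.dist_eq] at this
    have hwx : |v x - w n x| < ε' := h1 x hxIcc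
    rw [abs_lt] at hvxy hwx ⊢
    constructor <;> linarith
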